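/- Let N ≥ 1 and γ, θ ∈ ℝ with ¬(N even ∧ γ = 1 ∧ θ = 0). For each j ∈ ℤ/N let L_j < R_j be reals, κ_j : ℝ → ℝ be continuously differentiable, and u_j, v_j : ℝ → ℝ be twice continuously differentiable, with fluxes f_j := −κ_j·u_j' and g_j := −κ_j·v_j'. Suppose the family (u_j) with flux (f_j) satisfies, for every j, the field edge condition (1−γ/2)(u_j(R_j) − u_j(L_j)) = (γ/2)(u_{j+1}(L_{j+1}) − u_{j−1}(R_{j−1})) + (γθ/2)(u_j(L_j) + u_j(R_j)) − (γθ/2)(u_{j+1}(L_{j+1}) + u_{j−1}(R_{j−1})) and the flux edge condition (1−γ/2)(f_j(R_j) − f_j(L_j)) = (γ/2)(f_{j+1}(L_{j+1}) − f_{j−1}(R_{j−1})) − (γθ/2)(f_j(L_j) + f_j(R_j)) + (γθ/2)(f_{j+1}(L_{j+1}) + f_{j−1}(R_{j−1})), and likewise the family (v_j) with flux (g_j) satisfies both edge conditions. Then ∑_{j ∈ ℤ/N} ∫_{L_j}^{R_j} [ v_j(x)·(κ_j·u_j')'(x) − u_j(x)·(κ_j·v_j')'(x) ] dx = 0. -/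

import Mathlib

open MeasureTheory intervalIntegral

namespace SelfAdjointAux

variable (N : ℕ) [NeZero N]

/-- The shift-blend operator `x ↦ (1-t)•x + t•(x ∘ (·+s))` on `ZMod N → ℝ`. -/
def shOp (t : ℝ) (s : ZMod N) : (ZMod N → ℝ) →ₗ[ℝ] (ZMod N → ℝ) where
  toFun x := fun j => (1 - t) * x j + t * x (j + s)
  map_add' x y := by funext j; simp [Pi.add_apply]; ring
  map_smul' c x := by funext j; simp [Pi.smul_apply, smul_eq_mul]; ring

omit [NeZero N] in
lemma shOp_apply (t : ℝ) (s : ZMod N) (x : ZMod N → ℝ) (j : ZMod N) :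
    shOp N t s x j = (1 - t) * x j + t * x (j + s) := rfl

lemma shOp_adjoint (t : ℝ) (s : ZMod N) (x y : ZMod N → ℝ) :
    ∑ j, shOp N t s x j * y j = ∑ j, x j * shOp N t (-s) y j := by
  have h1 : ∀ j : ZMod N, shOp N t s x j * y j
      = (1 - t) * (x j * y j) + t * (x (j + s) * y j) := fun j => by
    simp [shOp_apply]; ring
  have h2 : ∀ j : ZMod N, x j * shOp N t (-s) y j
      = (1 - t) * (x j * y j) + t * (x j * y (j + -s)) := fun j => by
    simp [shOp_apply]; ring
  simp_rw [h1, h2, Finset.sum_add_distrib, ← Finset.mul_sum]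
  congr 1
  congr 1
  exact Fintype.sum_equiv (Equiv.addRight s) _ _ (fun j => by simp)

omit [NeZero N] in
lemma shOp_comm (t t' : ℝ) (s s' : ZMod N) (x : ZMod N → ℝ) :
    shOp N t s (shOp N t' s' x) = shOp N t' s' (shOp N t s x) := by
  funext j
  simp only [shOp_apply]
  rw [add_right_comm j s' s]
  ring

lemma shOp_inj (t : ℝ) (s : ZMod N) (h : ¬ (Even N ∧ t = 1/2)) :
    Function.Injective (shOp N t s) := by
  rw [injective_iff_map_eq_zero]
  intro d hd
  have hd' : ∀ j, (1 - t) * d j + t * d (j + s) = 0 := fun j => congrFun hd j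
  by_cases ht : t = 0
  · funext j; have := hd' j; simp [ht] at this; simpa using this
  · set r : ℝ := (t - 1) / t with hr
    have hrec : ∀ j, d (j + s) = r * d j := by
      intro j
      have h0 := hd' j
      have : t * d (j + s) = (t - 1) * d j := by linarith
      rw [hr, div_mul_eq_mul_div, eq_div_iff ht]
      linarith
    have hk : ∀ (k : ℕ) (j : ZMod N), d (j + k • s) = r ^ k * d j := by
      intro k
      induction k with
      | zero => intro j; simp
      | succ n ih =>
        intro j
        have hstep : j + (n + 1) • s = (j + n • s) + s := by
          rw [succ_nsmul, ← add_assoc]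
        rw [hstep, hrec, ih]; ring
    have hN : ∀ j, d j = r ^ N * d j := by
      intro j
      have := hk N j
      rwa [show (N • s : ZMod N) = 0 by
        rw [nsmul_eq_mul, ZMod.natCast_self, zero_mul], add_zero] at this
    by_cases hrN : r ^ N = 1
    · rcases (pow_eq_one_iff_of_ne_zero (NeZero.ne N)).mp hrN with h1 | ⟨h2, hev⟩
      · exfalso
        rw [hr, div_eq_one_iff_eq ht] at h1
        linarith
      · exfalso
        apply h
        refine ⟨hev, ?_⟩
        rw [hr, div_eq_iff ht] at h2
        linarith
    · funext j
      have h0 := hN j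
      have : (1 - r ^ N) * d j = 0 := by linarith
      rcases mul_eq_zero.mp this with h1 | h2
      · exact absurd (by linarith : r ^ N = 1) hrN
      · simpa using h2

lemma shOp_surj (t : ℝ) (s : ZMod N) (h : ¬ (Even N ∧ t = 1/2)) :
    Function.Surjective (shOp N t s) :=
  LinearMap.injective_iff_surjective.mp (shOp_inj N t s h)

lemma pair (α β : ℝ)
    (hcase : ¬ (Even N ∧ β = 1/2) ∨ ¬ (Even N ∧ α = 1/2))
    (a b e' G : ZMod N → ℝ)
    (hU : shOp N β (-1) b = shOp N α 1 a)
    (hG : shOp N α (-1) G = shOp N β 1 e') :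
    ∑ j, b j * G j = ∑ j, a j * e' j := by
  rcases hcase with hβ | hα
  · obtain ⟨H, hH⟩ := shOp_surj N β 1 hβ G
    have hAH : shOp N α (-1) H = e' := by
      apply shOp_inj N β 1 hβ
      calc shOp N β 1 (shOp N α (-1) H) = shOp N α (-1) (shOp N β 1 H) :=
            (shOp_comm N α β (-1) 1 H).symm
        _ = shOp N α (-1) G := by rw [hH]
        _ = shOp N β 1 e' := hG
    calc ∑ j, b j * G j = ∑ j, b j * shOp N β 1 H j := by rw [hH]
      _ = ∑ j, b j * shOp N β (-(-1)) H j := by norm_num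
      _ = ∑ j, shOp N β (-1) b j * H j := (shOp_adjoint N β (-1) b H).symm
      _ = ∑ j, shOp N α 1 a j * H j := by rw [hU]
      _ = ∑ j, a j * shOp N α (-1) H j := shOp_adjoint N α 1 a H
      _ = ∑ j, a j * e' j := by rw [hAH]
  · obtain ⟨H, hH⟩ := shOp_surj N α 1 hα b
    have hBH : shOp N β (-1) H = a := by
      apply shOp_inj N α 1 hα
      calc shOp N α 1 (shOp N β (-1) H) = shOp N β (-1) (shOp N α 1 H) :=
            shOp_comm N α β 1 (-1) H
        _ = shOp N β (-1) b := by rw [hH]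
        _ = shOp N α 1 a := hU
    calc ∑ j, b j * G j = ∑ j, shOp N α 1 H j * G j := by rw [hH]
      _ = ∑ j, H j * shOp N α (-1) G j := shOp_adjoint N α 1 H G
      _ = ∑ j, H j * shOp N β 1 e' j := by rw [hG]
      _ = ∑ j, H j * shOp N β (-(-1)) e' j := by norm_num
      _ = ∑ j, shOp N β (-1) H j * e' j := (shOp_adjoint N β (-1) H e').symm
      _ = ∑ j, a j * e' j := by rw [hBH]

/-- Integration by parts on a single element: the bilinear concomitant. -/
lemma elem_integral (L R : ℝ) (κ u v : ℝ → ℝ)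
    (hκ : ContDiff ℝ 1 κ) (hu : ContDiff ℝ 2 u) (hv : ContDiff ℝ 2 v) :
    ∫ x in L..R,
      (v x * deriv (fun y => κ y * deriv u y) x
        - u x * deriv (fun y => κ y * deriv v y) x)
    = (v R * (κ R * deriv u R) - u R * (κ R * deriv v R))
      - (v L * (κ L * deriv u L) - u L * (κ L * deriv v L)) := by
  have h2 : (2 : WithTop ℕ∞) = 1 + 1 := by norm_num
  have hu' : ContDiff ℝ 1 (deriv u) := by
    have := hu; rw [h2, contDiff_succ_iff_deriv] at this; exact this.2.2
  have hv' : ContDiff ℝ 1 (deriv v) := by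
    have := hv; rw [h2, contDiff_succ_iff_deriv] at this; exact this.2.2
  have hp : ContDiff ℝ 1 (fun y => κ y * deriv u y) := hκ.mul hu'
  have hq : ContDiff ℝ 1 (fun y => κ y * deriv v y) := hκ.mul hv'
  have hderiv : ∀ x ∈ Set.uIcc L R,
      HasDerivAt (fun y => v y * (κ y * deriv u y) - u y * (κ y * deriv v y))
        (v x * deriv (fun y => κ y * deriv u y) x
          - u x * deriv (fun y => κ y * deriv v y) x) x := by
    intro x _
    have hvx : HasDerivAt v (deriv v x) x :=
      ((hv.differentiable (by norm_num)) x).hasDerivAt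
    have hux : HasDerivAt u (deriv u x) x :=
      ((hu.differentiable (by norm_num)) x).hasDerivAt
    have hpx : HasDerivAt (fun y => κ y * deriv u y)
        (deriv (fun y => κ y * deriv u y) x) x :=
      ((hp.differentiable (by norm_num)) x).hasDerivAt
    have hqx : HasDerivAt (fun y => κ y * deriv v y)
        (deriv (fun y => κ y * deriv v y) x) x :=
      ((hq.differentiable (by norm_num)) x).hasDerivAt
    have := (hvx.mul hpx).sub (hux.mul hqx)
    refine this.congr_deriv ?_
    ring
  have hint : IntervalIntegrable
      (fun x => v x * deriv (fun y => κ y * deriv u y) x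
        - u x * deriv (fun y => κ y * deriv v y) x) volume L R := by
    apply Continuous.intervalIntegrable
    exact ((hv.continuous.mul (hp.continuous_deriv le_rfl)).sub
      (hu.continuous.mul (hq.continuous_deriv le_rfl)))
  exact integral_eq_sub_of_hasDerivAt hderiv hint

end SelfAdjointAux

/-- The field edge condition (2.3a) with parameters `(γ, θ)` for a family `w` of
functions on the cyclically indexed elements `X_j = (L j, R j)`. -/
def FieldEC (N : ℕ) (γ θ : ℝ) (L R : ZMod N → ℝ) (w : ZMod N → ℝ → ℝ) : Prop :=
  ∀ j : ZMod N,
    (1 - γ / 2) * (w j (R j) - w j (L j)) =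
      (γ / 2) * (w (j + 1) (L (j + 1)) - w (j - 1) (R (j - 1)))
      + (γ * θ / 2) * (w j (L j) + w j (R j))
      - (γ * θ / 2) * (w (j + 1) (L (j + 1)) + w (j - 1) (R (j - 1)))

/-- The flux edge condition (2.3b) with parameters `(γ, θ)` for a family `f` of
fluxes on the cyclically indexed elements `X_j = (L j, R j)`. -/
def FluxEC (N : ℕ) (γ θ : ℝ) (L R : ZMod N → ℝ) (f : ZMod N → ℝ → ℝ) : Prop :=
  ∀ j : ZMod N,
    (1 - γ / 2) * (f j (R j) - f j (L j)) =
      (γ / 2) * (f (j + 1) (L (j + 1)) - f (j - 1) (R (j - 1)))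
      - (γ * θ / 2) * (f j (L j) + f j (R j))
      + (γ * θ / 2) * (f (j + 1) (L (j + 1)) + f (j - 1) (R (j - 1)))

open SelfAdjointAux in
/-- Lemma 2.6 (self-adjointness for general coupling): the operator
`ℒu := (κ_j u')'` subject to the inter-element edge conditions (2.3) is
symmetric in the inner product `⟨v,u⟩ := ∑_j ∫_{X_j} v_j u_j dx`, for all real
`γ, θ` except possibly the isolated case of `N` even, `γ = 1`, `θ = 0`. -/
theorem selfAdjoint_general_coupling
    (N : ℕ) [NeZero N] (γ θ : ℝ)
    (hexc : ¬ (Even N ∧ γ = 1 ∧ θ = 0))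
    (L R : ZMod N → ℝ) (hLR : ∀ j, L j < R j)
    (κ u v : ZMod N → ℝ → ℝ)
    (hκ : ∀ j, ContDiff ℝ 1 (κ j))
    (hu : ∀ j, ContDiff ℝ 2 (u j)) (hv : ∀ j, ContDiff ℝ 2 (v j))
    (huE : FieldEC N γ θ L R u)
    (huF : FluxEC N γ θ L R (fun j x => -(κ j x * deriv (u j) x)))
    (hvE : FieldEC N γ θ L R v)
    (hvF : FluxEC N γ θ L R (fun j x => -(κ j x * deriv (v j) x))) :
    ∑ j : ZMod N, ∫ x in (L j)..(R j),
      (v j x * deriv (fun y => κ j y * deriv (u j) y) x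
        - u j x * deriv (fun y => κ j y * deriv (v j) y) x) = 0 := by
  -- abbreviations for the boundary traces
  set a : ZMod N → ℝ := fun j => u j (L j) with ha
  set b : ZMod N → ℝ := fun j => u j (R j) with hb
  set a' : ZMod N → ℝ := fun j => v j (L j) with ha'
  set b' : ZMod N → ℝ := fun j => v j (R j) with hb'
  set e : ZMod N → ℝ := fun j => -(κ j (L j) * deriv (u j) (L j)) with he
  set F : ZMod N → ℝ := fun j => -(κ j (R j) * deriv (u j) (R j)) with hF
  set e' : ZMod N → ℝ := fun j => -(κ j (L j) * deriv (v j) (L j)) with he'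
  set G : ZMod N → ℝ := fun j => -(κ j (R j) * deriv (v j) (R j)) with hG
  -- the non-exceptional hypothesis, reformulated for the two parameters
  have hcase : ¬ (Even N ∧ γ * (1 + θ) / 2 = 1/2) ∨ ¬ (Even N ∧ γ * (1 - θ) / 2 = 1/2) := by
    by_contra hc
    push_neg at hc
    obtain ⟨⟨hev, h1⟩, ⟨_, h2⟩⟩ := hc
    have hγ : γ = 1 := by linear_combination h1 + h2
    have hθ : θ = 0 := by linear_combination h1 - h2 - θ * hγ
    exact hexc ⟨hev, hγ, hθ⟩
  -- the edge conditions, reformulated through the shift-blend operators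
  have hU : shOp N (γ * (1 + θ) / 2) (-1) b = shOp N (γ * (1 - θ) / 2) 1 a := by
    funext j
    have h := huE j
    simp only [shOp_apply, hb, ha]
    rw [show j + (-1 : ZMod N) = j - 1 from (sub_eq_add_neg j 1).symm]
    linear_combination h
  have hV : shOp N (γ * (1 + θ) / 2) (-1) b' = shOp N (γ * (1 - θ) / 2) 1 a' := by
    funext j
    have h := hvE j
    simp only [shOp_apply, hb', ha']
    rw [show j + (-1 : ZMod N) = j - 1 from (sub_eq_add_neg j 1).symm]
    linear_combination h
  have hFl : shOp N (γ * (1 - θ) / 2) (-1) F = shOp N (γ * (1 + θ) / 2) 1 e := by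
    funext j
    have h := huF j
    simp only at h
    simp only [shOp_apply, hF, he]
    rw [show j + (-1 : ZMod N) = j - 1 from (sub_eq_add_neg j 1).symm]
    linear_combination h
  have hGl : shOp N (γ * (1 - θ) / 2) (-1) G = shOp N (γ * (1 + θ) / 2) 1 e' := by
    funext j
    have h := hvF j
    simp only at h
    simp only [shOp_apply, hG, he']
    rw [show j + (-1 : ZMod N) = j - 1 from (sub_eq_add_neg j 1).symm]
    linear_combination h
  have h1 := pair N (γ * (1 - θ) / 2) (γ * (1 + θ) / 2) hcase a b e' G hU hGl
  have h2 := pair N (γ * (1 - θ) / 2) (γ * (1 + θ) / 2) hcase a' b' e F hV hFl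
  have hI : ∀ j : ZMod N,
      (∫ x in (L j)..(R j),
        (v j x * deriv (fun y => κ j y * deriv (u j) y) x
          - u j x * deriv (fun y => κ j y * deriv (v j) y) x))
      = (b j * G j - b' j * F j) - (a j * e' j - a' j * e j) := by
    intro j
    rw [elem_integral (L j) (R j) (κ j) (u j) (v j) (hκ j) (hu j) (hv j)]
    simp only [hb, hG, hb', hF, ha, he', ha', he]
    ring
  rw [Finset.sum_congr rfl fun j _ => hI j]
  rw [Finset.sum_sub_distrib, Finset.sum_sub_distrib, Finset.sum_sub_distrib, h1, h2]
  ring
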